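/- For each fixed t > 0 the map y ↦ ξ(t,y) is nondecreasing on ℝ; moreover, the Lebesgue measure ℓ(t) of the set {y ∈ ℝ : ū_x(y) ≤ −1/t} is finite, and for all x₁ < x₂ one has ξ(t,x₂) − ξ(t,x₁) ≥ (x₂ − x₁ − ℓ(t))/4. Consequently ξ(t,y) → ±∞ as y → ±∞ and ξ(t,·) : ℝ → ℝ is surjective. -/

import Mathlib

open MeasureTheory Filter Set

/-- `φ(t,y) = (1/4) ∫_{{ū_x > -2/t}} sign(y-x) ū_x(x)² dx` for `t ≠ 0`, and the full
integral `φ(0,y) = (1/4) ∫_ℝ sign(y-x) ū_x(x)² dx` at `t = 0`. -/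
noncomputable def phiHS (w : ℝ → ℝ) (t y : ℝ) : ℝ :=
  if t = 0 then (1 / 4) * ∫ x : ℝ, Real.sign (y - x) * (w x) ^ 2
  else (1 / 4) * ∫ x in {x : ℝ | w x > -2 / t}, Real.sign (y - x) * (w x) ^ 2

/-- The characteristic `ξ(t,y) = y + t ū(y) + ∫₀ᵗ (t-s) φ(s,y) ds`. -/
noncomputable def xiHS (u w : ℝ → ℝ) (t y : ℝ) : ℝ :=
  y + t * u y + ∫ s in (0 : ℝ)..t, (t - s) * phiHS w s y

noncomputable def hsH (t v : ℝ) : ℝ := if -2/t ≤ v then t^2*v^2/4 else -t*v - 1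

lemma hs_sign_measurable : Measurable Real.sign := by
  unfold Real.sign
  exact Measurable.ite (measurableSet_lt measurable_id measurable_const) measurable_const
    (Measurable.ite (measurableSet_lt measurable_const measurable_id) measurable_const
      measurable_const)

lemma hs_abs_sign_le (r : ℝ) : |Real.sign r| ≤ 1 := by
  rcases Real.sign_apply_eq r with h | h | h <;> rw [h] <;> norm_num

lemma hsH_nonneg {t : ℝ} (ht : 0 < t) (v : ℝ) : 0 ≤ hsH t v := by
  unfold hsH
  split
  · positivity
  · rename_i h
    push_neg at h
    have : t * v < -2 := by
      have := (lt_div_iff₀ ht).mp h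
      nlinarith
    nlinarith

lemma hsH_le {t : ℝ} (ht : 0 < t) (v : ℝ) : hsH t v ≤ t^2*v^2/4 := by
  unfold hsH
  split
  · exact le_refl _
  · rename_i h
    push_neg at h
    nlinarith [sq_nonneg (t*v/2 + 1), (lt_div_iff₀ ht).mp h]

lemma hsg_nonneg {t : ℝ} (ht : 0 < t) (v : ℝ) : 0 ≤ 1 + t*v + hsH t v := by
  unfold hsH
  split
  · nlinarith [sq_nonneg (1 + t*v/2)]
  · ring_nf
    nlinarith

lemma hsg_quarter {t v : ℝ} (ht : 0 < t) (hv : -1/t < v) : 1/4 ≤ 1 + t*v + hsH t v := by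
  have h1 : -1 < t * v := by
    have := (div_lt_iff₀ ht).mp hv
    nlinarith
  have h2 : -2/t ≤ v := by
    rw [div_le_iff₀ ht] at *
    nlinarith
  unfold hsH
  rw [if_pos h2]
  nlinarith

lemma hsH_measurable (t : ℝ) : Measurable (hsH t) := by
  unfold hsH
  exact Measurable.ite (measurableSet_le measurable_const measurable_id)
    (by fun_prop) (by fun_prop)

lemma hs_integral_eval {t : ℝ} (ht : 0 < t) (v : ℝ) :
    ∫ s in Ioc (0:ℝ) t, (t - s) * ((1/2) * (if s * v > -2 then v^2 else 0)) = hsH t v := by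
  have hbase : ∀ a b : ℝ, ∫ s in a..b, (t - s) * (v^2/2) = (t*(b-a) - (b^2-a^2)/2) * (v^2/2) := by
    intro a b
    rw [intervalIntegral.integral_mul_const, intervalIntegral.integral_sub
      intervalIntegrable_const intervalIntegral.intervalIntegrable_id,
      intervalIntegral.integral_const, integral_id, smul_eq_mul]
    ring
  by_cases h : -2/t ≤ v
  · have hcase : ∀ s ∈ Ioc (0:ℝ) t,
        (t - s) * ((1/2) * (if s * v > -2 then v^2 else 0)) = (t - s) * (v^2/2) := by
      intro s hs
      obtain ⟨hs1, hs2⟩ := hs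
      rcases eq_or_lt_of_le hs2 with rfl | hst
      · ring_nf
      · have hcond : s * v > -2 := by
          rcases le_or_gt 0 v with hv | hv
          · nlinarith
          · have h2 : -2 ≤ t * v := by
              rw [div_le_iff₀ ht] at h; nlinarith
            nlinarith
        rw [if_pos hcond]
        ring
    rw [setIntegral_congr_fun measurableSet_Ioc hcase,
      ← intervalIntegral.integral_of_le ht.le, hbase]
    unfold hsH
    rw [if_pos h]
    ring
  · push_neg at h
    have hv : v < 0 := lt_trans h (div_neg_of_neg_of_pos (by norm_num) ht)
    have htv : t * v < -2 := by
      have := (lt_div_iff₀ ht).mp h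
      nlinarith
    set τ : ℝ := -2/v with hτ
    have hτpos : 0 < τ :=
      div_pos_of_neg_of_neg (by norm_num) hv
    have hτt : τ < t := by
      rw [hτ, div_lt_iff_of_neg hv]
      nlinarith
    have hcase : ∀ s ∈ Ioc (0:ℝ) t,
        (t - s) * ((1/2) * (if s * v > -2 then v^2 else 0))
          = (Iio τ).indicator (fun s => (t - s) * (v^2/2)) s := by
      intro s hs
      simp only [indicator_apply, mem_Iio]
      by_cases hsτ : s < τ
      · have hcond : s * v > -2 := by
          rw [hτ, lt_div_iff_of_neg hv] at hsτ
          nlinarith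
        rw [if_pos hsτ, if_pos hcond]; ring
      · have hcond : ¬ (s * v > -2) := by
          push_neg at hsτ ⊢
          rw [hτ, div_le_iff_of_neg hv] at hsτ
          nlinarith
        rw [if_neg hsτ, if_neg hcond]; ring
    rw [setIntegral_congr_fun measurableSet_Ioc hcase,
      setIntegral_indicator measurableSet_Iio]
    have hset : Ioc (0:ℝ) t ∩ Iio τ = Ioo 0 τ := by
      ext s
      simp only [mem_inter_iff, mem_Ioc, mem_Iio, mem_Ioo]
      constructor
      · rintro ⟨⟨h1, _⟩, h3⟩; exact ⟨h1, h3⟩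
      · rintro ⟨h1, h3⟩; exact ⟨⟨h1, le_of_lt (lt_of_lt_of_le h3 hτt.le)⟩, h3⟩
    rw [hset,
      show (volume : Measure ℝ).restrict (Ioo 0 τ) = volume.restrict (Ioc 0 τ) from
        Measure.restrict_congr_set Ioo_ae_eq_Ioc,
      ← intervalIntegral.integral_of_le hτpos.le, hbase]
    unfold hsH
    rw [if_neg (not_le.mpr h), hτ]
    have hvne : v ≠ 0 := hv.ne
    field_simp
    ring

section main

variable {w : ℝ → ℝ}

lemma hs_q_measurable (hw : Measurable w) (y s : ℝ) :
    Measurable (fun x => if -2 < s * w x then Real.sign (y - x) * w x ^ 2 else 0) :=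
  Measurable.ite (measurableSet_lt measurable_const (measurable_const.mul hw))
    ((hs_sign_measurable.comp (measurable_const.sub measurable_id)).mul (hw.pow_const 2))
    measurable_const

lemma hs_q_bound (y s : ℝ) (x : ℝ) :
    ‖if -2 < s * w x then Real.sign (y - x) * w x ^ 2 else 0‖ ≤ w x ^ 2 := by
  split
  · rw [Real.norm_eq_abs, abs_mul, abs_pow, sq_abs]
    calc |Real.sign (y - x)| * w x ^ 2 ≤ 1 * w x ^ 2 :=
          mul_le_mul_of_nonneg_right (hs_abs_sign_le _) (sq_nonneg _)
      _ = w x ^ 2 := one_mul _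
  · simp [sq_nonneg]

lemma hs_q_integrable (hw : Measurable w) (hw2 : MemLp w 2 (volume : Measure ℝ)) (y s : ℝ) :
    Integrable (fun x => if -2 < s * w x then Real.sign (y - x) * w x ^ 2 else 0) volume :=
  hw2.integrable_sq.mono' (hs_q_measurable hw y s).aestronglyMeasurable
    (Filter.Eventually.of_forall (hs_q_bound y s))

lemma hs_G_measurable (hw : Measurable w) (y : ℝ) :
    Measurable (fun s => ∫ x : ℝ, if -2 < s * w x then Real.sign (y - x) * w x ^ 2 else 0) := by
  have hQ : Measurable (fun p : ℝ × ℝ =>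
      if -2 < p.1 * w p.2 then Real.sign (y - p.2) * w p.2 ^ 2 else 0) :=
    Measurable.ite (measurableSet_lt measurable_const
        (measurable_fst.mul (hw.comp measurable_snd)))
      ((hs_sign_measurable.comp (measurable_const.sub measurable_snd)).mul
        ((hw.comp measurable_snd).pow_const 2))
      measurable_const
  exact hQ.stronglyMeasurable.integral_prod_right'.measurable

lemma hs_G_bound (hw : Measurable w) (hw2 : MemLp w 2 (volume : Measure ℝ)) (y s : ℝ) :
    ‖∫ x : ℝ, if -2 < s * w x then Real.sign (y - x) * w x ^ 2 else 0‖
      ≤ ∫ x : ℝ, w x ^ 2 :=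
  norm_integral_le_of_norm_le hw2.integrable_sq (Filter.Eventually.of_forall (hs_q_bound y s))

lemma hs_phi_eq (hw : Measurable w) (y : ℝ) {s : ℝ} (hs : 0 < s) :
    phiHS w s y = (1/4) * ∫ x : ℝ, if -2 < s * w x then Real.sign (y - x) * w x ^ 2 else 0 := by
  rw [phiHS, if_neg hs.ne']
  congr 1
  rw [← integral_indicator (show MeasurableSet {x : ℝ | w x > -2/s} from
    measurableSet_lt measurable_const hw)]
  congr 1
  ext x
  rw [indicator_apply]
  have : x ∈ {x : ℝ | w x > -2/s} ↔ -2 < s * w x := by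
    simp only [mem_setOf_eq, gt_iff_lt]
    rw [div_lt_iff₀ hs, mul_comm]
  by_cases hx : x ∈ {x : ℝ | w x > -2/s}
  · rw [if_pos hx, if_pos (this.mp hx)]
  · rw [if_neg hx, if_neg (fun hc => hx (this.mpr hc))]

lemma hs_F_intervalIntegrable (hw : Measurable w) (hw2 : MemLp w 2 (volume : Measure ℝ))
    {t : ℝ} (ht : 0 < t) (y : ℝ) :
    IntervalIntegrable (fun s => (t - s) * ((1/4) *
      ∫ x : ℝ, if -2 < s * w x then Real.sign (y - x) * w x ^ 2 else 0)) volume 0 t := by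
  rw [intervalIntegrable_iff]
  set M : ℝ := ∫ x : ℝ, w x ^ 2 with hM
  have hmeas : Measurable (fun s => (t - s) * ((1/4) *
      ∫ x : ℝ, if -2 < s * w x then Real.sign (y - x) * w x ^ 2 else 0)) :=
    (measurable_const.sub measurable_id).mul (measurable_const.mul (hs_G_measurable hw y))
  refine Integrable.mono' (g := fun _ => (|t| + |t|) * ((1/4) * M))
    ((integrableOn_const_iff).mpr (Or.inr ?_)) hmeas.aestronglyMeasurable ?_
  · rw [uIoc_of_le ht.le]; exact measure_Ioc_lt_top
  · refine (ae_restrict_mem measurableSet_uIoc).mono fun s hs => ?_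
    have hsle : |s| ≤ |t| := by
      rw [uIoc_of_le ht.le] at hs
      rw [abs_of_pos hs.1, abs_of_pos ht]
      exact hs.2
    have hMnn : 0 ≤ M := integral_nonneg fun x => sq_nonneg _
    rw [norm_mul]
    have h1 : ‖t - s‖ ≤ |t| + |t| := by
      rw [Real.norm_eq_abs]
      calc |t - s| ≤ |t| + |s| := abs_sub _ _
        _ ≤ |t| + |t| := by linarith
    have h2 : ‖(1/4) * ∫ x : ℝ, if -2 < s * w x then Real.sign (y - x) * w x ^ 2 else 0‖
        ≤ (1/4) * M := by
      rw [norm_mul, Real.norm_eq_abs (1/4)]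
      have := hs_G_bound hw hw2 y s
      rw [← hM] at this
      calc |1/4| * ‖∫ x : ℝ, if -2 < s * w x then Real.sign (y - x) * w x ^ 2 else 0‖
          ≤ |1/4| * M := mul_le_mul_of_nonneg_left this (abs_nonneg _)
        _ = (1/4) * M := by norm_num
    calc ‖t - s‖ * ‖(1/4) * ∫ x : ℝ, if -2 < s * w x then Real.sign (y - x) * w x ^ 2 else 0‖
        ≤ (|t| + |t|) * ((1/4) * M) := by
          apply mul_le_mul h1 h2 (norm_nonneg _) (by positivity)

end main

section main2

variable {w : ℝ → ℝ}

lemma hs_ae_ne (x₁ x₂ : ℝ) : ∀ᵐ x : ℝ ∂(volume : Measure ℝ), x ≠ x₁ ∧ x ≠ x₂ := by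
  have h1 : ∀ᵐ x : ℝ ∂(volume : Measure ℝ), x ≠ x₁ := by
    rw [ae_iff]
    simp only [not_not, setOf_eq_eq_singleton]
    exact measure_singleton x₁
  have h2 : ∀ᵐ x : ℝ ∂(volume : Measure ℝ), x ≠ x₂ := by
    rw [ae_iff]
    simp only [not_not, setOf_eq_eq_singleton]
    exact measure_singleton x₂
  exact h1.and h2

lemma hs_w_integrableOn (hw2 : MemLp w 2 (volume : Measure ℝ)) (a b : ℝ) :
    IntegrableOn w (Ioc a b) volume := by
  haveI : Fact ((volume : Measure ℝ) (Ioc a b) < ⊤) := ⟨measure_Ioc_lt_top⟩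
  exact (hw2.restrict (Ioc a b)).integrable one_le_two

lemma hs_g_integrableOn (hw : Measurable w) (hw2 : MemLp w 2 (volume : Measure ℝ))
    {t : ℝ} (ht : 0 < t) (a b : ℝ) :
    IntegrableOn (fun x => 1 + t * w x + hsH t (w x)) (Ioc a b) volume := by
  have h1 : IntegrableOn (fun _ : ℝ => (1:ℝ)) (Ioc a b) volume :=
    (integrableOn_const_iff).mpr (Or.inr measure_Ioc_lt_top)
  have h2 : IntegrableOn (fun x => t * w x) (Ioc a b) volume :=
    (hs_w_integrableOn hw2 a b).const_mul t
  have h3 : IntegrableOn (fun x => hsH t (w x)) (Ioc a b) volume := by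
    refine Integrable.mono' (g := fun x => t^2 * w x ^ 2 / 4)
      (((hw2.integrable_sq.integrableOn).const_mul (t^2)).div_const 4)
      ((hsH_measurable t).comp hw).aestronglyMeasurable
      (Filter.Eventually.of_forall fun x => ?_)
    rw [Real.norm_eq_abs, abs_of_nonneg (hsH_nonneg ht _)]
    exact hsH_le ht (w x)
  exact (h1.add h2).add h3

lemma hs_key (hw : Measurable w) (hw2 : MemLp w 2 (volume : Measure ℝ))
    (u : ℝ → ℝ) (hu : ∀ a b : ℝ, a ≤ b → u b - u a = ∫ x in Ioc a b, w x)
    {t : ℝ} (ht : 0 < t) {x₁ x₂ : ℝ} (hx : x₁ ≤ x₂) :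
    xiHS u w t x₂ - xiHS u w t x₁
      = ∫ x in Ioc x₁ x₂, (1 + t * w x + hsH t (w x)) := by
  -- step 1: rewrite the time integrals
  have step1 : ∀ y : ℝ, (∫ s in (0:ℝ)..t, (t - s) * phiHS w s y)
      = ∫ s in (0:ℝ)..t, (t - s) * ((1/4) *
          ∫ x : ℝ, if -2 < s * w x then Real.sign (y - x) * w x ^ 2 else 0) := by
    intro y
    apply intervalIntegral.integral_congr
    intro s hs
    rw [uIcc_of_le ht.le] at hs
    dsimp only
    rcases eq_or_lt_of_le hs.1 with h0 | h0
    · rw [← h0]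
      rw [phiHS, if_pos rfl]
      have : (fun x => if -2 < (0:ℝ) * w x then Real.sign (y - x) * w x ^ 2 else 0)
          = fun x => Real.sign (y - x) * w x ^ 2 :=
        funext fun x => by rw [zero_mul]; exact if_pos (by norm_num)
      rw [this]
    · rw [hs_phi_eq hw y h0]
  -- step 3 (pointwise in s): difference of the two space integrals
  have step3 : ∀ s : ℝ,
      ((t - s) * ((1/4) * ∫ x : ℝ, if -2 < s * w x then Real.sign (x₂ - x) * w x ^ 2 else 0))
        - ((t - s) * ((1/4) * ∫ x : ℝ, if -2 < s * w x then Real.sign (x₁ - x) * w x ^ 2 else 0))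
      = (t - s) * ((1/2) * ∫ x in Ioc x₁ x₂, (if -2 < s * w x then w x ^ 2 else 0)) := by
    intro s
    have hint₂ := hs_q_integrable hw hw2 x₂ s
    have hint₁ := hs_q_integrable hw hw2 x₁ s
    have hdiff : (∫ x : ℝ, if -2 < s * w x then Real.sign (x₂ - x) * w x ^ 2 else 0)
        - (∫ x : ℝ, if -2 < s * w x then Real.sign (x₁ - x) * w x ^ 2 else 0)
        = ∫ x : ℝ, ((if -2 < s * w x then Real.sign (x₂ - x) * w x ^ 2 else 0)
            - (if -2 < s * w x then Real.sign (x₁ - x) * w x ^ 2 else 0)) :=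
      (integral_sub hint₂ hint₁).symm
    have hptwise : ∀ x : ℝ, x ≠ x₁ → x ≠ x₂ →
        ((if -2 < s * w x then Real.sign (x₂ - x) * w x ^ 2 else 0)
          - (if -2 < s * w x then Real.sign (x₁ - x) * w x ^ 2 else 0))
        = 2 * (Ioc x₁ x₂).indicator (fun x => if -2 < s * w x then w x ^ 2 else 0) x := by
      intro x hx1 hx2
      rw [indicator_apply]
      by_cases hc : -2 < s * w x
      · rw [if_pos hc, if_pos hc]
        by_cases hmem : x ∈ Ioc x₁ x₂
        · obtain ⟨hm1, hm2⟩ := hmem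
          have hxlt2 : x < x₂ := lt_of_le_of_ne hm2 hx2
          rw [if_pos ⟨hm1, hm2⟩, if_pos hc]
          rw [Real.sign_of_pos (by linarith : (0:ℝ) < x₂ - x),
            Real.sign_of_neg (by linarith : x₁ - x < 0)]
          ring
        · rw [if_neg hmem]
          rcases lt_or_gt_of_ne hx1 with h | h
          · rw [Real.sign_of_pos (by linarith : (0:ℝ) < x₂ - x),
              Real.sign_of_pos (by linarith : (0:ℝ) < x₁ - x)]
            ring
          · have h2 : x₂ < x := by
              by_contra hcon
              push_neg at hcon
              exact hmem ⟨h, hcon⟩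
            rw [Real.sign_of_neg (by linarith : x₂ - x < 0),
              Real.sign_of_neg (by linarith : x₁ - x < 0)]
            ring
      · rw [if_neg hc, if_neg hc]
        by_cases hmem : x ∈ Ioc x₁ x₂
        · rw [if_pos hmem, if_neg hc]; ring
        · rw [if_neg hmem]; ring
    have hcongr : (∫ x : ℝ, ((if -2 < s * w x then Real.sign (x₂ - x) * w x ^ 2 else 0)
            - (if -2 < s * w x then Real.sign (x₁ - x) * w x ^ 2 else 0)))
        = ∫ x : ℝ, 2 * (Ioc x₁ x₂).indicator (fun x => if -2 < s * w x then w x ^ 2 else 0) x := by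
      apply integral_congr_ae
      filter_upwards [hs_ae_ne x₁ x₂] with x hx'
      exact hptwise x hx'.1 hx'.2
    have hAB : (∫ x : ℝ, if -2 < s * w x then Real.sign (x₂ - x) * w x ^ 2 else 0)
        - (∫ x : ℝ, if -2 < s * w x then Real.sign (x₁ - x) * w x ^ 2 else 0)
        = 2 * ∫ x in Ioc x₁ x₂, (if -2 < s * w x then w x ^ 2 else 0) := by
      rw [hdiff, hcongr, integral_const_mul, integral_indicator measurableSet_Ioc]
    linear_combination ((t - s)/4) * hAB
  -- step 4: Fubini
  have step4 : (∫ s in (0:ℝ)..t, (t - s) *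
        ((1/2) * ∫ x in Ioc x₁ x₂, (if -2 < s * w x then w x ^ 2 else 0)))
      = ∫ x in Ioc x₁ x₂, hsH t (w x) := by
    rw [intervalIntegral.integral_of_le ht.le]
    have hP : Integrable (Function.uncurry fun s x =>
        (t - s) * ((1/2) * (if -2 < s * w x then w x ^ 2 else 0)))
        ((volume.restrict (Ioc 0 t)).prod (volume.restrict (Ioc x₁ x₂))) := by
      have hmeas : Measurable (fun p : ℝ × ℝ =>
          (t - p.1) * ((1/2) * (if -2 < p.1 * w p.2 then w p.2 ^ 2 else 0))) :=
        (measurable_const.sub measurable_fst).mul (measurable_const.mul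
          (Measurable.ite (measurableSet_lt measurable_const
            (measurable_fst.mul (hw.comp measurable_snd)))
            ((hw.comp measurable_snd).pow_const 2) measurable_const))
      refine Integrable.mono' (g := fun p => (|t| + |p.1|) * ((1/2) * w p.2 ^ 2))
        ?_ hmeas.aestronglyMeasurable (Filter.Eventually.of_forall fun p => ?_)
      · haveI : Fact ((volume : Measure ℝ) (Ioc (0:ℝ) t) < ⊤) := ⟨measure_Ioc_lt_top⟩
        exact Integrable.mul_prod
          ((continuous_const.add continuous_abs).integrableOn_Ioc
            : Integrable (fun s : ℝ => |t| + |s|) (volume.restrict (Ioc 0 t)))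
          ((hw2.integrable_sq.integrableOn).const_mul (1/2))
      · have hr : ‖(1/2 : ℝ) * (if -2 < p.1 * w p.2 then w p.2 ^ 2 else 0)‖
            ≤ (1/2) * w p.2 ^ 2 := by
          rw [norm_mul, Real.norm_eq_abs]
          have : ‖if -2 < p.1 * w p.2 then w p.2 ^ 2 else 0‖ ≤ w p.2 ^ 2 := by
            split
            · rw [Real.norm_eq_abs, abs_of_nonneg (sq_nonneg _)]
            · simp [sq_nonneg]
          calc |1/2| * ‖if -2 < p.1 * w p.2 then w p.2 ^ 2 else 0‖
              ≤ |1/2| * w p.2 ^ 2 := mul_le_mul_of_nonneg_left this (abs_nonneg _)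
            _ = (1/2) * w p.2 ^ 2 := by norm_num
        have ht' : ‖t - p.1‖ ≤ |t| + |p.1| := by
          rw [Real.norm_eq_abs]; exact abs_sub _ _
        rw [Function.uncurry, norm_mul]
        exact mul_le_mul ht' hr (norm_nonneg _) (by positivity)
    have hswap := integral_integral_swap hP
    have hpull : ∀ s : ℝ, (∫ x in Ioc x₁ x₂,
        (t - s) * ((1/2) * (if -2 < s * w x then w x ^ 2 else 0)))
        = (t - s) * ((1/2) * ∫ x in Ioc x₁ x₂, (if -2 < s * w x then w x ^ 2 else 0)) := by
      intro s
      rw [integral_const_mul, integral_const_mul]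
    simp only [← hpull]
    rw [hswap]
    exact setIntegral_congr_fun measurableSet_Ioc fun x _ => hs_integral_eval ht (w x)
  -- assemble
  have hF₂ := hs_F_intervalIntegrable hw hw2 ht x₂
  have hF₁ := hs_F_intervalIntegrable hw hw2 ht x₁
  have hJ : (∫ s in (0:ℝ)..t, (t - s) * phiHS w s x₂)
      - (∫ s in (0:ℝ)..t, (t - s) * phiHS w s x₁)
      = ∫ x in Ioc x₁ x₂, hsH t (w x) := by
    rw [step1 x₂, step1 x₁, ← intervalIntegral.integral_sub hF₂ hF₁]
    rw [intervalIntegral.integral_congr (fun s _ => step3 s)]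
    exact step4
  have e1 : ∫ _x in Ioc x₁ x₂, (1:ℝ) = x₂ - x₁ := by
    rw [setIntegral_const, measureReal_def, Real.volume_Ioc, smul_eq_mul, mul_one,
      ENNReal.toReal_ofReal (sub_nonneg.mpr hx)]
  have h1 : IntegrableOn (fun _ : ℝ => (1:ℝ)) (Ioc x₁ x₂) volume :=
    (integrableOn_const_iff).mpr (Or.inr measure_Ioc_lt_top)
  have h2 : IntegrableOn (fun x => t * w x) (Ioc x₁ x₂) volume :=
    (hs_w_integrableOn hw2 x₁ x₂).const_mul t
  have h3 : IntegrableOn (fun x => hsH t (w x)) (Ioc x₁ x₂) volume := by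
    have := hs_g_integrableOn hw hw2 ht x₁ x₂
    refine Integrable.mono' (g := fun x => t^2 * w x ^ 2 / 4)
      (((hw2.integrable_sq.integrableOn).const_mul (t^2)).div_const 4)
      ((hsH_measurable t).comp hw).aestronglyMeasurable
      (Filter.Eventually.of_forall fun x => ?_)
    rw [Real.norm_eq_abs, abs_of_nonneg (hsH_nonneg ht _)]
    exact hsH_le ht (w x)
  have hrhs : (∫ x in Ioc x₁ x₂, (1 + t * w x + hsH t (w x)))
      = (x₂ - x₁) + t * (∫ x in Ioc x₁ x₂, w x) + ∫ x in Ioc x₁ x₂, hsH t (w x) := by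
    have h12 : IntegrableOn (fun x => 1 + t * w x) (Ioc x₁ x₂) volume := h1.add h2
    rw [integral_add h12 h3, integral_add h1 h2, e1, integral_const_mul]
  rw [hrhs, ← hu x₁ x₂ hx, ← hJ]
  unfold xiHS
  ring

end main2

section main3

variable {w : ℝ → ℝ}

lemma hs_ell_lt_top (hw2 : MemLp w 2 (volume : Measure ℝ)) {t : ℝ} (ht : 0 < t) :
    volume {y : ℝ | w y ≤ -1 / t} < ⊤ := by
  have hsub : {y : ℝ | w y ≤ -1 / t} ⊆ {y : ℝ | 1/t^2 ≤ w y ^ 2} := by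
    intro y hy
    simp only [mem_setOf_eq] at *
    have h1 : w y * t ≤ -1 := (le_div_iff₀ ht).mp hy
    have h2 : 1 ≤ (w y * t)^2 := by nlinarith
    rw [div_le_iff₀ (by positivity : (0:ℝ) < t^2)]
    nlinarith
  exact lt_of_le_of_lt (measure_mono hsub)
    (hw2.integrable_sq.measure_ge_lt_top (by positivity : (0:ℝ) < 1/t^2))

lemma hs_quant (hw : Measurable w) (hw2 : MemLp w 2 (volume : Measure ℝ))
    (u : ℝ → ℝ) (hu : ∀ a b : ℝ, a ≤ b → u b - u a = ∫ x in Ioc a b, w x)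
    {t : ℝ} (ht : 0 < t) {x₁ x₂ : ℝ} (hx : x₁ ≤ x₂) :
    (x₂ - x₁ - (volume {y : ℝ | w y ≤ -1 / t}).toReal) / 4
      ≤ xiHS u w t x₂ - xiHS u w t x₁ := by
  rw [hs_key hw hw2 u hu ht hx]
  set B : Set ℝ := {y : ℝ | w y ≤ -1 / t} with hB
  have hBmeas : MeasurableSet B := hw measurableSet_Iic
  have hgint := hs_g_integrableOn hw hw2 ht x₁ x₂
  have hgnn : ∀ x : ℝ, 0 ≤ 1 + t * w x + hsH t (w x) := fun x => hsg_nonneg ht (w x)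
  have hstep1 : ∫ x in Ioc x₁ x₂ \ B, (1 + t * w x + hsH t (w x))
      ≤ ∫ x in Ioc x₁ x₂, (1 + t * w x + hsH t (w x)) :=
    setIntegral_mono_set hgint (Filter.Eventually.of_forall hgnn)
      (HasSubset.Subset.eventuallyLE diff_subset)
  have hstep2 : ∫ _x in Ioc x₁ x₂ \ B, (1/4 : ℝ)
      ≤ ∫ x in Ioc x₁ x₂ \ B, (1 + t * w x + hsH t (w x)) := by
    refine setIntegral_mono_on
      ((integrableOn_const_iff).mpr (Or.inr (lt_of_le_of_lt (measure_mono diff_subset)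
        measure_Ioc_lt_top)))
      (hgint.mono_set diff_subset)
      (measurableSet_Ioc.diff hBmeas) fun x hxm => ?_
    have : -1/t < w x := by
      have := hxm.2
      simp only [hB, mem_setOf_eq] at this
      push_neg at this
      linarith [this]
    exact hsg_quarter ht this
  have hconst : ∫ _x in Ioc x₁ x₂ \ B, (1/4 : ℝ)
      = (volume (Ioc x₁ x₂ \ B)).toReal * (1/4) := by
    rw [setIntegral_const, smul_eq_mul, measureReal_def]
  have hvol : x₂ - x₁ - (volume B).toReal ≤ (volume (Ioc x₁ x₂ \ B)).toReal := by
    rcases le_total (volume B) (volume (Ioc x₁ x₂)) with hc | hc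
    · have h1 : volume (Ioc x₁ x₂) - volume B ≤ volume (Ioc x₁ x₂ \ B) := le_measure_diff
      have h2 := ENNReal.toReal_mono
        (ne_of_lt (lt_of_le_of_lt (measure_mono diff_subset) measure_Ioc_lt_top)) h1
      rw [ENNReal.toReal_sub_of_le hc (ne_of_lt measure_Ioc_lt_top)] at h2
      rw [Real.volume_Ioc, ENNReal.toReal_ofReal (sub_nonneg.mpr hx)] at h2
      linarith
    · have h2 := ENNReal.toReal_mono (ne_of_lt (hs_ell_lt_top hw2 ht)) hc
      rw [Real.volume_Ioc, ENNReal.toReal_ofReal (sub_nonneg.mpr hx)] at h2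
      have := ENNReal.toReal_nonneg (a := volume (Ioc x₁ x₂ \ B))
      linarith
  calc (x₂ - x₁ - (volume B).toReal) / 4
      ≤ (volume (Ioc x₁ x₂ \ B)).toReal * (1/4) := by linarith
    _ = ∫ _x in Ioc x₁ x₂ \ B, (1/4 : ℝ) := hconst.symm
    _ ≤ _ := le_trans hstep2 hstep1

lemma hs_phi_congr {w' : ℝ → ℝ} (h : w =ᵐ[(volume : Measure ℝ)] w') (t y : ℝ) :
    phiHS w t y = phiHS w' t y := by
  unfold phiHS
  split
  · congr 1
    apply integral_congr_ae
    filter_upwards [h] with x hx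
    rw [hx]
  · have hset : {x : ℝ | w x > -2/t} =ᵐ[(volume : Measure ℝ)] {x : ℝ | w' x > -2/t} := by
      rw [Filter.eventuallyEq_set]
      filter_upwards [h] with x hx
      simp [hx]
    rw [show (volume : Measure ℝ).restrict {x : ℝ | w x > -2/t}
        = volume.restrict {x : ℝ | w' x > -2/t} from Measure.restrict_congr_set hset]
    congr 1
    apply integral_congr_ae
    filter_upwards [ae_restrict_of_ae h] with x hx
    rw [hx]

end main3

/-- For each `t > 0`: `ξ(t,·)` is nondecreasing, the set `{ū_x ≤ -1/t}` has finite
measure `ℓ(t)`, `ξ(t,x₂) - ξ(t,x₁) ≥ (x₂ - x₁ - ℓ(t))/4`, and consequently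
`ξ(t,·)` tends to `±∞` at `±∞` and is surjective. -/
theorem xi_monotone_surjective (ubar ubarx : ℝ → ℝ)
    (hAC : ∀ a b : ℝ, a ≤ b → ubar b - ubar a = ∫ x in a..b, ubarx x)
    (hL2 : MemLp ubarx 2 (volume : Measure ℝ)) :
    ∀ t : ℝ, 0 < t →
      Monotone (fun y => xiHS ubar ubarx t y) ∧
      volume {y : ℝ | ubarx y ≤ -1 / t} < ⊤ ∧
      (∀ x₁ x₂ : ℝ, x₁ < x₂ →
        (x₂ - x₁ - (volume {y : ℝ | ubarx y ≤ -1 / t}).toReal) / 4 ≤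
          xiHS ubar ubarx t x₂ - xiHS ubar ubarx t x₁) ∧
      Filter.Tendsto (fun y => xiHS ubar ubarx t y) Filter.atTop Filter.atTop ∧
      Filter.Tendsto (fun y => xiHS ubar ubarx t y) Filter.atBot Filter.atBot ∧
      Function.Surjective (fun y => xiHS ubar ubarx t y) := by
  intro t ht
  set w : ℝ → ℝ := hL2.1.mk ubarx with hwdef
  have hw : Measurable w := hL2.1.stronglyMeasurable_mk.measurable
  have heq : ubarx =ᵐ[(volume : Measure ℝ)] w := hL2.1.ae_eq_mk
  have hw2 : MemLp w 2 (volume : Measure ℝ) := hL2.ae_eq heq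
  have hxi : ∀ y : ℝ, xiHS ubar ubarx t y = xiHS ubar w t y := by
    intro y
    unfold xiHS
    congr 1
    apply intervalIntegral.integral_congr
    intro s _
    dsimp only
    rw [hs_phi_congr heq]
  have hmeq : volume {y : ℝ | ubarx y ≤ -1 / t} = volume {y : ℝ | w y ≤ -1 / t} := by
    apply measure_congr
    rw [Filter.eventuallyEq_set]
    filter_upwards [heq] with x hx
    simp [hx]
  have hu : ∀ a b : ℝ, a ≤ b → ubar b - ubar a = ∫ x in Ioc a b, w x := by
    intro a b hab
    rw [hAC a b hab, intervalIntegral.integral_of_le hab]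
    exact integral_congr_ae (ae_restrict_of_ae heq)
  have hquant : ∀ x₁ x₂ : ℝ, x₁ ≤ x₂ →
      (x₂ - x₁ - (volume {y : ℝ | ubarx y ≤ -1 / t}).toReal) / 4
        ≤ xiHS ubar ubarx t x₂ - xiHS ubar ubarx t x₁ := by
    intro x₁ x₂ h
    rw [hxi x₂, hxi x₁, hmeq]
    exact hs_quant hw hw2 ubar hu ht h
  have hmono : Monotone (fun y => xiHS ubar ubarx t y) := by
    intro a b hab
    simp only
    rw [hxi a, hxi b]
    have hkey := hs_key hw hw2 ubar hu ht hab
    have hnn : 0 ≤ ∫ x in Ioc a b, (1 + t * w x + hsH t (w x)) :=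
      setIntegral_nonneg measurableSet_Ioc fun x _ => hsg_nonneg ht (w x)
    linarith
  set l : ℝ := (volume {y : ℝ | ubarx y ≤ -1 / t}).toReal with hl
  have htop : Filter.Tendsto (fun y => xiHS ubar ubarx t y) Filter.atTop Filter.atTop := by
    refine tendsto_atTop_mono' Filter.atTop (f₁ := fun y => xiHS ubar ubarx t 0 + (y - l)/4)
      ?_ ?_
    · filter_upwards [Filter.eventually_ge_atTop (0:ℝ)] with y hy
      have := hquant 0 y hy
      linarith
    · exact tendsto_atTop_add_const_left _ _
        (Tendsto.atTop_div_const (by norm_num)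
          (tendsto_atTop_add_const_right _ (-l) Filter.tendsto_id))
  have hbot : Filter.Tendsto (fun y => xiHS ubar ubarx t y) Filter.atBot Filter.atBot := by
    refine tendsto_atBot_mono' Filter.atBot (f₁ := fun y => xiHS ubar ubarx t 0 + (y + l)/4)
      ?_ ?_
    · filter_upwards [Filter.eventually_le_atBot (0:ℝ)] with y hy
      have := hquant y 0 hy
      linarith
    · exact tendsto_atBot_add_const_left _ _
        (Tendsto.atBot_div_const (by norm_num)
          (tendsto_atBot_add_const_right _ l Filter.tendsto_id))
  have hgII : ∀ a b : ℝ, IntervalIntegrable (fun x => 1 + t * w x + hsH t (w x)) volume a b := by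
    intro a b
    rw [intervalIntegrable_iff]
    exact hs_g_integrableOn hw hw2 ht (a ⊓ b) (a ⊔ b)
  have hxiformula : ∀ y : ℝ, xiHS ubar ubarx t y
      = xiHS ubar ubarx t 0 + ∫ x in (0:ℝ)..y, (1 + t * w x + hsH t (w x)) := by
    intro y
    rcases le_total 0 y with h | h
    · have hkey := hs_key hw hw2 ubar hu ht h
      rw [hxi y, hxi 0, intervalIntegral.integral_of_le h]
      linarith
    · have hkey := hs_key hw hw2 ubar hu ht h
      rw [hxi y, hxi 0, intervalIntegral.integral_symm,
        intervalIntegral.integral_of_le h]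
      linarith
  have hcont : Continuous (fun y => xiHS ubar ubarx t y) := by
    rw [show (fun y => xiHS ubar ubarx t y)
        = fun y => xiHS ubar ubarx t 0 + ∫ x in (0:ℝ)..y, (1 + t * w x + hsH t (w x))
      from funext hxiformula]
    exact continuous_const.add (intervalIntegral.continuous_primitive hgII 0)
  exact ⟨hmono, hmeq ▸ hs_ell_lt_top hw2 ht, fun x₁ x₂ h => hquant x₁ x₂ h.le,
    htop, hbot, hcont.surjective htop hbot⟩
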